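/- arXiv:1912.01351 — 3 statements merged into one kernel-verified Lean document; each statement's English description precedes it below -/
import Mathlib

section
/- In the octonions, q₀(λ·(zμ)) = (q₀(μ)·q₀(z))·q₀(λ) for all nonzero λ, μ, z ∈ 𝕆, where q₀(z) = conj(z)/|z|⁸. -/
noncomputable section

/-- The octonions, realized as the Cayley–Dickson double of the quaternions. -/
abbrev 𝕆 : Type := Quaternion ℝ × Quaternion ℝ

namespace Octo

/-- Cayley–Dickson multiplication: (a,b)(c,d) = (ac − d b̄, ā d + c b). -/
def omul (x y : 𝕆) : 𝕆 :=
  (x.1 * y.1 - y.2 * star x.2, star x.1 * y.2 + y.1 * x.2)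

/-- Octonionic conjugation. -/
def oconj (x : 𝕆) : 𝕆 := (star x.1, -x.2)

/-- The unit octonion. -/
def oone : 𝕆 := (1, 0)

/-- Real part. -/
def re (x : 𝕆) : ℝ := x.1.re

/-- Euclidean inner product on 𝕆 ≅ ℝ⁸ (coordinatewise). -/
def oinner (x y : 𝕆) : ℝ :=
  x.1.re * y.1.re + x.1.imI * y.1.imI + x.1.imJ * y.1.imJ + x.1.imK * y.1.imK +
  x.2.re * y.2.re + x.2.imI * y.2.imI + x.2.imJ * y.2.imJ + x.2.imK * y.2.imK

/-- The norm N(z) = z·conj(z), a real scalar. -/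
def N (x : 𝕆) : ℝ := re (omul x (oconj x))

/-- The trace S(z) = z + conj(z), a real scalar. -/
def S (x : 𝕆) : ℝ := re (x + oconj x)

/-- The Euclidean absolute value |z| = √N(z). -/
def oabs (x : 𝕆) : ℝ := Real.sqrt (N x)

/-- The octonionic Cauchy kernel q₀(z) = conj(z)/|z|⁸. -/
def q0 (x : 𝕆) : 𝕆 := (oabs x ^ 8)⁻¹ • oconj x


lemma omul_smul_left (r : ℝ) (x y : 𝕆) : omul (r • x) y = r • omul x y := by
  simp only [omul, Prod.smul_fst, Prod.smul_snd, Prod.smul_mk, star_smul,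
    Quaternion.star_smul, smul_mul_assoc, mul_smul_comm, smul_sub, smul_add]

lemma omul_smul_right (r : ℝ) (x y : 𝕆) : omul x (r • y) = r • omul x y := by
  simp only [omul, Prod.smul_fst, Prod.smul_snd, Prod.smul_mk, star_smul,
    Quaternion.star_smul, smul_mul_assoc, mul_smul_comm, smul_sub, smul_add]

lemma oconj_omul (x y : 𝕆) : oconj (omul x y) = omul (oconj y) (oconj x) := by
  simp only [omul, oconj, Prod.mk.injEq]
  constructor
  · rw [star_sub, star_mul, star_mul]
    simp only [star_star, star_neg, neg_mul, mul_neg, sub_neg_eq_add, sub_eq_add_neg, neg_neg]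
  · simp [star_star, mul_neg, neg_add, add_comm]

lemma N_eq (x : 𝕆) : N x = Quaternion.normSq x.1 + Quaternion.normSq x.2 := by
  simp [N, omul, oconj, re, Quaternion.normSq_def', Quaternion.re_mul,
    Quaternion.re_star, Quaternion.imI_star, Quaternion.imJ_star, Quaternion.imK_star]
  ring

lemma N_nonneg (x : 𝕆) : 0 ≤ N x := by
  rw [N_eq]
  exact add_nonneg (Quaternion.normSq_nonneg) (Quaternion.normSq_nonneg)

lemma N_omul (x y : 𝕆) : N (omul x y) = N x * N y := by
  simp only [N_eq, omul, Quaternion.normSq_def', Quaternion.re_mul, Quaternion.imI_mul,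
    Quaternion.imJ_mul, Quaternion.imK_mul, Quaternion.re_sub, Quaternion.imI_sub,
    Quaternion.imJ_sub, Quaternion.imK_sub, Quaternion.re_add, Quaternion.imI_add,
    Quaternion.imJ_add, Quaternion.imK_add, Quaternion.re_star, Quaternion.imI_star,
    Quaternion.imJ_star, Quaternion.imK_star]
  ring

lemma oabs_omul (x y : 𝕆) : oabs (omul x y) = oabs x * oabs y := by
  rw [oabs, oabs, oabs, N_omul, Real.sqrt_mul (N_nonneg x)]

/-- q₀(λ·(zμ)) = (q₀(μ)·q₀(z))·q₀(λ). -/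
theorem q0_product_formula (lam μ z : 𝕆)
    (hlam : lam ≠ 0) (hμ : μ ≠ 0) (hz : z ≠ 0) :
    q0 (omul lam (omul z μ)) = omul (omul (q0 μ) (q0 z)) (q0 lam) := by
  simp only [q0, omul_smul_left, omul_smul_right, oconj_omul, oabs_omul, smul_smul]
  congr 1
  rw [mul_pow, mul_pow, mul_inv]
  ring

end Octo
end
end

section
/- Let m₁, m₂, m₃ be distinct square-free positive integers and let Ω ⊆ 𝕆 be the set of octonions of the form γ₀ + γ₁√m₁ e₁ + γ₂√m₂ e₂ + γ₃√m₃ e₃ + γ₄√(m₁m₂) e₄ + γ₅√(m₁m₃) e₅ + γ₆√(m₂m₃) e₆ + γ₇√(m₁m₂m₃) e₇ with all γ_i ∈ ℚ. Then Ω is a ℚ-subalgebra of 𝕆 stable under conjugation, and every element of Ω has rational trace and rational norm. -/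
noncomputable section

namespace Octo

/-- The standard octonionic basis 1, e₁, …, e₇ (with e₁=i, e₂=j, e₄=e₁e₂, e₃=(0,1), …). -/
def e : Fin 8 → 𝕆 :=
  ![(1, 0), ((⟨0,1,0,0⟩ : Quaternion ℝ), 0), ((⟨0,0,1,0⟩ : Quaternion ℝ), 0),
    (0, 1), ((⟨0,0,0,1⟩ : Quaternion ℝ), 0), (0, (⟨0,1,0,0⟩ : Quaternion ℝ)),
    (0, (⟨0,0,1,0⟩ : Quaternion ℝ)), (0, (⟨0,0,0,1⟩ : Quaternion ℝ))]

/-- The real coordinates of an octonion with respect to the basis `e`. -/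
def coord (i : Fin 8) (z : 𝕆) : ℝ :=
  ![z.1.re, z.1.imI, z.1.imJ, z.2.re, z.1.imK, z.2.imI, z.2.imJ, z.2.imK] i

/-- The coefficient weights 1, √m₁, √m₂, √m₃, √(m₁m₂), √(m₁m₃), √(m₂m₃), √(m₁m₂m₃). -/
def weight (m₁ m₂ m₃ : ℕ) : Fin 8 → ℝ :=
  ![1, Real.sqrt m₁, Real.sqrt m₂, Real.sqrt m₃, Real.sqrt (m₁ * m₂),
    Real.sqrt (m₁ * m₃), Real.sqrt (m₂ * m₃), Real.sqrt (m₁ * m₂ * m₃)]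


def qmk (a b c d : ℝ) : Quaternion ℝ := ⟨a, b, c, d⟩

@[simp] lemma qmk_re (a b c d : ℝ) : (qmk a b c d).re = a := rfl
@[simp] lemma qmk_imI (a b c d : ℝ) : (qmk a b c d).imI = b := rfl
@[simp] lemma qmk_imJ (a b c d : ℝ) : (qmk a b c d).imJ = c := rfl
@[simp] lemma qmk_imK (a b c d : ℝ) : (qmk a b c d).imK = d := rfl

def rep' (m₁ m₂ m₃ : ℕ) (a0 a1 a2 a3 a4 a5 a6 a7 : ℚ) : 𝕆 :=
  (qmk a0 (a1 * Real.sqrt m₁) (a2 * Real.sqrt m₂) (a4 * Real.sqrt (m₁ * m₂)),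
   qmk (a3 * Real.sqrt m₃) (a5 * Real.sqrt (m₁ * m₃)) (a6 * Real.sqrt (m₂ * m₃))
     (a7 * Real.sqrt (m₁ * m₂ * m₃)))

lemma rep_eq (m₁ m₂ m₃ : ℕ) (γ : Fin 8 → ℚ) :
    ∑ i, ((γ i : ℝ) * weight m₁ m₂ m₃ i) • e i
      = rep' m₁ m₂ m₃ (γ 0) (γ 1) (γ 2) (γ 3) (γ 4) (γ 5) (γ 6) (γ 7) := by
  rw [Fin.sum_univ_eight]
  simp only [show e 0 = (qmk 1 0 0 0, 0) from rfl, show e 1 = (qmk 0 1 0 0, 0) from rfl,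
    show e 2 = (qmk 0 0 1 0, 0) from rfl, show e 3 = ((0 : Quaternion ℝ), qmk 1 0 0 0) from rfl,
    show e 4 = (qmk 0 0 0 1, 0) from rfl,
    show e 5 = (0, qmk 0 1 0 0) from rfl,
    show e 6 = (0, qmk 0 0 1 0) from rfl,
    show e 7 = (0, qmk 0 0 0 1) from rfl,
    show weight m₁ m₂ m₃ 0 = 1 from rfl, show weight m₁ m₂ m₃ 1 = Real.sqrt m₁ from rfl,
    show weight m₁ m₂ m₃ 2 = Real.sqrt m₂ from rfl, show weight m₁ m₂ m₃ 3 = Real.sqrt m₃ from rfl,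
    show weight m₁ m₂ m₃ 4 = Real.sqrt (m₁*m₂) from rfl,
    show weight m₁ m₂ m₃ 5 = Real.sqrt (m₁*m₃) from rfl,
    show weight m₁ m₂ m₃ 6 = Real.sqrt (m₂*m₃) from rfl,
    show weight m₁ m₂ m₃ 7 = Real.sqrt (m₁*m₂*m₃) from rfl, rep']
  refine Prod.ext ?_ ?_ <;> ext <;> simp [Quaternion.ext_iff] <;> ring

lemma mem_iff (m₁ m₂ m₃ : ℕ) (z : 𝕆) :
    (z ∈ {z : 𝕆 | ∃ γ : Fin 8 → ℚ, z = ∑ i, ((γ i : ℝ) * weight m₁ m₂ m₃ i) • e i}) ↔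
    ∃ a0 a1 a2 a3 a4 a5 a6 a7 : ℚ, z = rep' m₁ m₂ m₃ a0 a1 a2 a3 a4 a5 a6 a7 := by
  simp only [Set.mem_setOf_eq]
  constructor
  · rintro ⟨γ, rfl⟩
    exact ⟨γ 0, γ 1, γ 2, γ 3, γ 4, γ 5, γ 6, γ 7, rep_eq m₁ m₂ m₃ γ⟩
  · rintro ⟨a0, a1, a2, a3, a4, a5, a6, a7, rfl⟩
    refine ⟨![a0,a1,a2,a3,a4,a5,a6,a7], ?_⟩
    rw [rep_eq]
    rfl

lemma rep'_add (m₁ m₂ m₃ : ℕ) (a0 a1 a2 a3 a4 a5 a6 a7 b0 b1 b2 b3 b4 b5 b6 b7 : ℚ) :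
    rep' m₁ m₂ m₃ a0 a1 a2 a3 a4 a5 a6 a7 + rep' m₁ m₂ m₃ b0 b1 b2 b3 b4 b5 b6 b7
      = rep' m₁ m₂ m₃ (a0+b0) (a1+b1) (a2+b2) (a3+b3) (a4+b4) (a5+b5) (a6+b6) (a7+b7) := by
  simp only [rep']
  refine Prod.ext ?_ ?_ <;> ext <;> simp <;> push_cast <;> ring

lemma rep'_smul (m₁ m₂ m₃ : ℕ) (q a0 a1 a2 a3 a4 a5 a6 a7 : ℚ) :
    (q : ℝ) • rep' m₁ m₂ m₃ a0 a1 a2 a3 a4 a5 a6 a7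
      = rep' m₁ m₂ m₃ (q*a0) (q*a1) (q*a2) (q*a3) (q*a4) (q*a5) (q*a6) (q*a7) := by
  simp only [rep']
  refine Prod.ext ?_ ?_ <;> ext <;> simp <;> push_cast <;> ring

lemma rep'_conj (m₁ m₂ m₃ : ℕ) (a0 a1 a2 a3 a4 a5 a6 a7 : ℚ) :
    oconj (rep' m₁ m₂ m₃ a0 a1 a2 a3 a4 a5 a6 a7)
      = rep' m₁ m₂ m₃ a0 (-a1) (-a2) (-a3) (-a4) (-a5) (-a6) (-a7) := by
  simp only [rep', oconj]
  refine Prod.ext ?_ ?_ <;> ext <;> simp <;> push_cast <;> ring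

lemma oone_rep (m₁ m₂ m₃ : ℕ) : oone = rep' m₁ m₂ m₃ 1 0 0 0 0 0 0 0 := by
  simp only [rep', oone]
  refine Prod.ext ?_ ?_ <;> ext <;> simp [Quaternion.re_one, Quaternion.imI_one, Quaternion.imJ_one, Quaternion.imK_one, QuaternionAlgebra.re_one, QuaternionAlgebra.imI_one, QuaternionAlgebra.imJ_one, QuaternionAlgebra.imK_one, Quaternion.re_zero, Quaternion.imI_zero, Quaternion.imJ_zero, Quaternion.imK_zero, QuaternionAlgebra.re_zero, QuaternionAlgebra.imI_zero, QuaternionAlgebra.imJ_zero, QuaternionAlgebra.imK_zero]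

lemma rep'_S (m₁ m₂ m₃ : ℕ) (a0 a1 a2 a3 a4 a5 a6 a7 : ℚ) :
    S (rep' m₁ m₂ m₃ a0 a1 a2 a3 a4 a5 a6 a7) = ((2 * a0 : ℚ) : ℝ) := by
  simp only [rep', S, oconj, re]
  push_cast
  simp
  ring

lemma rep'_mul (m₁ m₂ m₃ : ℕ) (a0 a1 a2 a3 a4 a5 a6 a7 b0 b1 b2 b3 b4 b5 b6 b7 : ℚ) :
    omul (rep' m₁ m₂ m₃ a0 a1 a2 a3 a4 a5 a6 a7) (rep' m₁ m₂ m₃ b0 b1 b2 b3 b4 b5 b6 b7)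
      = rep' m₁ m₂ m₃ ((-1)*a7*b7*(m₁:ℚ)*(m₂:ℚ)*(m₃:ℚ) + (-1)*a6*b6*(m₂:ℚ)*(m₃:ℚ) + (-1)*a5*b5*(m₁:ℚ)*(m₃:ℚ) + (-1)*a4*b4*(m₁:ℚ)*(m₂:ℚ) + (-1)*a3*b3*(m₃:ℚ) + (-1)*a2*b2*(m₂:ℚ) + (-1)*a1*b1*(m₁:ℚ) + a0*b0) (a7*b6*(m₂:ℚ)*(m₃:ℚ) + (-1)*a6*b7*(m₂:ℚ)*(m₃:ℚ) + a5*b3*(m₃:ℚ) + (-1)*a4*b2*(m₂:ℚ) + (-1)*a3*b5*(m₃:ℚ) + a2*b4*(m₂:ℚ) + a1*b0 + a0*b1) ((-1)*a7*b5*(m₁:ℚ)*(m₃:ℚ) + a6*b3*(m₃:ℚ) + a5*b7*(m₁:ℚ)*(m₃:ℚ) + a4*b1*(m₁:ℚ) + (-1)*a3*b6*(m₃:ℚ) + a2*b0 + (-1)*a1*b4*(m₁:ℚ) + a0*b2) ((-1)*a7*b4*(m₁:ℚ)*(m₂:ℚ) + (-1)*a6*b2*(m₂:ℚ) + (-1)*a5*b1*(m₁:ℚ)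 + a4*b7*(m₁:ℚ)*(m₂:ℚ) + a3*b0 + a2*b6*(m₂:ℚ) + a1*b5*(m₁:ℚ) + a0*b3) (a7*b3*(m₃:ℚ) + a6*b5*(m₃:ℚ) + (-1)*a5*b6*(m₃:ℚ) + a4*b0 + (-1)*a3*b7*(m₃:ℚ) + (-1)*a2*b1 + a1*b2 + a0*b4) (a7*b2*(m₂:ℚ) + (-1)*a6*b4*(m₂:ℚ) + a5*b0 + a4*b6*(m₂:ℚ) + a3*b1 + (-1)*a2*b7*(m₂:ℚ) + (-1)*a1*b3 + a0*b5) ((-1)*a7*b1*(m₁:ℚ) + a6*b0 + a5*b4*(m₁:ℚ) + (-1)*a4*b5*(m₁:ℚ) + a3*b2 + (-1)*a2*b3 + a1*b7*(m₁:ℚ) + a0*b6) (a7*b0 + a6*b1 + (-1)*a5*b2 + (-1)*a4*b3 + a3*b4 + a2*b5 + (-1)*a1*b6 + a0*b7) := by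
  simp only [rep', omul]
  have h1 : (0:ℝ) ≤ (m₁:ℝ) := Nat.cast_nonneg _
  have h2 : (0:ℝ) ≤ (m₂:ℝ) := Nat.cast_nonneg _
  have hab : Real.sqrt ((m₁:ℝ) * (m₂:ℝ)) = Real.sqrt m₁ * Real.sqrt m₂ := Real.sqrt_mul h1 _
  have hac : Real.sqrt ((m₁:ℝ) * (m₃:ℝ)) = Real.sqrt m₁ * Real.sqrt m₃ := Real.sqrt_mul h1 _
  have hbc : Real.sqrt ((m₂:ℝ) * (m₃:ℝ)) = Real.sqrt m₂ * Real.sqrt m₃ := Real.sqrt_mul h2 _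
  have habc : Real.sqrt ((m₁:ℝ) * (m₂:ℝ) * (m₃:ℝ)) = Real.sqrt m₁ * Real.sqrt m₂ * Real.sqrt m₃ := by
    rw [Real.sqrt_mul (by positivity), Real.sqrt_mul h1]
  rw [hab, hac, hbc, habc]
  set a := Real.sqrt (m₁:ℝ) with hadef
  set b := Real.sqrt (m₂:ℝ) with hbdef
  set c := Real.sqrt (m₃:ℝ) with hcdef
  have sa : a * a = (m₁:ℝ) := Real.mul_self_sqrt h1
  have sb : b * b = (m₂:ℝ) := Real.mul_self_sqrt h2
  have sc : c * c = (m₃:ℝ) := Real.mul_self_sqrt (Nat.cast_nonneg _)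
  refine Prod.ext (Quaternion.ext _ _ ?_ ?_ ?_ ?_) (Quaternion.ext _ _ ?_ ?_ ?_ ?_) <;>
    simp only [Quaternion.re_mul, Quaternion.imI_mul, Quaternion.imJ_mul, Quaternion.imK_mul,
      Quaternion.re_sub, Quaternion.imI_sub, Quaternion.imJ_sub, Quaternion.imK_sub,
      Quaternion.re_add, Quaternion.imI_add, Quaternion.imJ_add, Quaternion.imK_add,
      Quaternion.re_star, Quaternion.imI_star, Quaternion.imJ_star, Quaternion.imK_star, qmk_re, qmk_imI, qmk_imJ, qmk_imK] <;>
    push_cast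
  · linear_combination ((-1)*(a7:ℝ)*(b7:ℝ)*b*b*c*c + (-1)*(a5:ℝ)*(b5:ℝ)*c*c + (-1)*(a4:ℝ)*(b4:ℝ)*b*b + (-1)*(a1:ℝ)*(b1:ℝ)) * sa + ((-1)*(a7:ℝ)*(b7:ℝ)*(m₁:ℝ)*c*c + (-1)*(a6:ℝ)*(b6:ℝ)*c*c + (-1)*(a4:ℝ)*(b4:ℝ)*(m₁:ℝ) + (-1)*(a2:ℝ)*(b2:ℝ)) * sb + ((-1)*(a7:ℝ)*(b7:ℝ)*(m₁:ℝ)*(m₂:ℝ) + (-1)*(a6:ℝ)*(b6:ℝ)*(m₂:ℝ) + (-1)*(a5:ℝ)*(b5:ℝ)*(m₁:ℝ) + (-1)*(a3:ℝ)*(b3:ℝ)) * sc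
  · linear_combination ((a7:ℝ)*(b6:ℝ)*a*c*c + (-1)*(a6:ℝ)*(b7:ℝ)*a*c*c + (-1)*(a4:ℝ)*(b2:ℝ)*a + (a2:ℝ)*(b4:ℝ)*a) * sb + ((a7:ℝ)*(b6:ℝ)*(m₂:ℝ)*a + (-1)*(a6:ℝ)*(b7:ℝ)*(m₂:ℝ)*a + (a5:ℝ)*(b3:ℝ)*a + (-1)*(a3:ℝ)*(b5:ℝ)*a) * sc
  · linear_combination ((-1)*(a7:ℝ)*(b5:ℝ)*b*c*c + (a5:ℝ)*(b7:ℝ)*b*c*c + (a4:ℝ)*(b1:ℝ)*b + (-1)*(a1:ℝ)*(b4:ℝ)*b) * sa + ((-1)*(a7:ℝ)*(b5:ℝ)*(m₁:ℝ)*b + (a6:ℝ)*(b3:ℝ)*b + (a5:ℝ)*(b7:ℝ)*(m₁:ℝ)*b + (-1)*(a3:ℝ)*(b6:ℝ)*b) * sc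
  · linear_combination ((a7:ℝ)*(b3:ℝ)*a*b + (a6:ℝ)*(b5:ℝ)*a*b + (-1)*(a5:ℝ)*(b6:ℝ)*a*b + (-1)*(a3:ℝ)*(b7:ℝ)*a*b) * sc
  · linear_combination ((-1)*(a7:ℝ)*(b4:ℝ)*b*b*c + (-1)*(a5:ℝ)*(b1:ℝ)*c + (a4:ℝ)*(b7:ℝ)*b*b*c + (a1:ℝ)*(b5:ℝ)*c) * sa + ((-1)*(a7:ℝ)*(b4:ℝ)*(m₁:ℝ)*c + (-1)*(a6:ℝ)*(b2:ℝ)*c + (a4:ℝ)*(b7:ℝ)*(m₁:ℝ)*c + (a2:ℝ)*(b6:ℝ)*c) * sb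
  · linear_combination ((a7:ℝ)*(b2:ℝ)*a*c + (-1)*(a6:ℝ)*(b4:ℝ)*a*c + (a4:ℝ)*(b6:ℝ)*a*c + (-1)*(a2:ℝ)*(b7:ℝ)*a*c) * sb
  · linear_combination ((-1)*(a7:ℝ)*(b1:ℝ)*b*c + (a5:ℝ)*(b4:ℝ)*b*c + (-1)*(a4:ℝ)*(b5:ℝ)*b*c + (a1:ℝ)*(b7:ℝ)*b*c) * sa
  · ring

lemma rep'_N (m₁ m₂ m₃ : ℕ) (a0 a1 a2 a3 a4 a5 a6 a7 : ℚ) :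
    N (rep' m₁ m₂ m₃ a0 a1 a2 a3 a4 a5 a6 a7)
      = ((a7*a7*(m₁:ℚ)*(m₂:ℚ)*(m₃:ℚ) + a6*a6*(m₂:ℚ)*(m₃:ℚ) + a5*a5*(m₁:ℚ)*(m₃:ℚ) + a4*a4*(m₁:ℚ)*(m₂:ℚ) + a3*a3*(m₃:ℚ) + a2*a2*(m₂:ℚ) + a1*a1*(m₁:ℚ) + a0*a0 : ℚ) : ℝ) := by
  simp only [rep', N, oconj, omul, re]
  have h1 : (0:ℝ) ≤ (m₁:ℝ) := Nat.cast_nonneg _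
  have h2 : (0:ℝ) ≤ (m₂:ℝ) := Nat.cast_nonneg _
  have hab : Real.sqrt ((m₁:ℝ) * (m₂:ℝ)) = Real.sqrt m₁ * Real.sqrt m₂ := Real.sqrt_mul h1 _
  have hac : Real.sqrt ((m₁:ℝ) * (m₃:ℝ)) = Real.sqrt m₁ * Real.sqrt m₃ := Real.sqrt_mul h1 _
  have hbc : Real.sqrt ((m₂:ℝ) * (m₃:ℝ)) = Real.sqrt m₂ * Real.sqrt m₃ := Real.sqrt_mul h2 _
  have habc : Real.sqrt ((m₁:ℝ) * (m₂:ℝ) * (m₃:ℝ)) = Real.sqrt m₁ * Real.sqrt m₂ * Real.sqrt m₃ := by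
    rw [Real.sqrt_mul (by positivity), Real.sqrt_mul h1]
  rw [hab, hac, hbc, habc]
  set a := Real.sqrt (m₁:ℝ) with hadef
  set b := Real.sqrt (m₂:ℝ) with hbdef
  set c := Real.sqrt (m₃:ℝ) with hcdef
  have sa : a * a = (m₁:ℝ) := Real.mul_self_sqrt h1
  have sb : b * b = (m₂:ℝ) := Real.mul_self_sqrt h2
  have sc : c * c = (m₃:ℝ) := Real.mul_self_sqrt (Nat.cast_nonneg _)
  simp only [Quaternion.re_mul, Quaternion.re_sub, Quaternion.re_star,
    Quaternion.imI_star, Quaternion.imJ_star, Quaternion.imK_star, Quaternion.re_neg,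
    Quaternion.imI_neg, Quaternion.imJ_neg, Quaternion.imK_neg, qmk_re, qmk_imI, qmk_imJ, qmk_imK]
  push_cast
  linear_combination ((a7:ℝ)*(a7:ℝ)*b*b*c*c + (a5:ℝ)*(a5:ℝ)*c*c + (a4:ℝ)*(a4:ℝ)*b*b + (a1:ℝ)*(a1:ℝ)) * sa + ((a7:ℝ)*(a7:ℝ)*(m₁:ℝ)*c*c + (a6:ℝ)*(a6:ℝ)*c*c + (a4:ℝ)*(a4:ℝ)*(m₁:ℝ) + (a2:ℝ)*(a2:ℝ)) * sb + ((a7:ℝ)*(a7:ℝ)*(m₁:ℝ)*(m₂:ℝ) + (a6:ℝ)*(a6:ℝ)*(m₂:ℝ) + (a5:ℝ)*(a5:ℝ)*(m₁:ℝ) + (a3:ℝ)*(a3:ℝ)) * sc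

/-- The set of octonions with coefficients γᵢ ∈ ℚ times the triquadratic weights
is a conjugation-stable ℚ-subalgebra all of whose elements have rational trace
and norm. -/
theorem triquadratic_rational_subalgebra (m₁ m₂ m₃ : ℕ)
    (h₁ : Squarefree m₁) (h₂ : Squarefree m₂) (h₃ : Squarefree m₃)
    (hp₁ : 0 < m₁) (hp₂ : 0 < m₂) (hp₃ : 0 < m₃)
    (h12 : m₁ ≠ m₂) (h13 : m₁ ≠ m₃) (h23 : m₂ ≠ m₃)
    (Ω : Set 𝕆)
    (hΩ : Ω = {z : 𝕆 | ∃ γ : Fin 8 → ℚ, z = ∑ i, ((γ i : ℝ) * weight m₁ m₂ m₃ i) • e i}) :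
    oone ∈ Ω ∧
    (∀ a ∈ Ω, ∀ b ∈ Ω, a + b ∈ Ω) ∧
    (∀ a ∈ Ω, ∀ b ∈ Ω, omul a b ∈ Ω) ∧
    (∀ q : ℚ, ∀ a ∈ Ω, (q : ℝ) • a ∈ Ω) ∧
    (∀ a ∈ Ω, oconj a ∈ Ω) ∧
    (∀ a ∈ Ω, (∃ q : ℚ, S a = q) ∧ (∃ q : ℚ, N a = q)) := by
  subst hΩ
  refine ⟨?_, ?_, ?_, ?_, ?_, ?_⟩
  · rw [mem_iff]
    exact ⟨1,0,0,0,0,0,0,0, oone_rep m₁ m₂ m₃⟩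
  · intro x hx y hy
    rw [mem_iff] at hx hy ⊢
    obtain ⟨a0,a1,a2,a3,a4,a5,a6,a7,rfl⟩ := hx
    obtain ⟨b0,b1,b2,b3,b4,b5,b6,b7,rfl⟩ := hy
    exact ⟨_,_,_,_,_,_,_,_, rep'_add m₁ m₂ m₃ a0 a1 a2 a3 a4 a5 a6 a7 b0 b1 b2 b3 b4 b5 b6 b7⟩
  · intro x hx y hy
    rw [mem_iff] at hx hy ⊢
    obtain ⟨a0,a1,a2,a3,a4,a5,a6,a7,rfl⟩ := hx
    obtain ⟨b0,b1,b2,b3,b4,b5,b6,b7,rfl⟩ := hy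
    exact ⟨_,_,_,_,_,_,_,_, rep'_mul m₁ m₂ m₃ a0 a1 a2 a3 a4 a5 a6 a7 b0 b1 b2 b3 b4 b5 b6 b7⟩
  · intro q x hx
    rw [mem_iff] at hx ⊢
    obtain ⟨a0,a1,a2,a3,a4,a5,a6,a7,rfl⟩ := hx
    exact ⟨_,_,_,_,_,_,_,_, rep'_smul m₁ m₂ m₃ q a0 a1 a2 a3 a4 a5 a6 a7⟩
  · intro x hx
    rw [mem_iff] at hx ⊢
    obtain ⟨a0,a1,a2,a3,a4,a5,a6,a7,rfl⟩ := hx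
    exact ⟨_,_,_,_,_,_,_,_, rep'_conj m₁ m₂ m₃ a0 a1 a2 a3 a4 a5 a6 a7⟩
  · intro x hx
    rw [mem_iff] at hx
    obtain ⟨a0,a1,a2,a3,a4,a5,a6,a7,rfl⟩ := hx
    exact ⟨⟨_, rep'_S m₁ m₂ m₃ a0 a1 a2 a3 a4 a5 a6 a7⟩, ⟨_, rep'_N m₁ m₂ m₃ a0 a1 a2 a3 a4 a5 a6 a7⟩⟩

end Octo
end
end

section
/- Let m₁, m₂, m₃ be distinct square-free positive integers. The set of octonions γ₀ + γ₁√m₁ e₁ + γ₂√m₂ e₂ + γ₃√m₃ e₃ + γ₄√(m₁m₂) e₄ + γ₅√(m₁m₃) e₅ + γ₆√(m₂m₃) e₆ + γ₇√(m₁m₂m₃) e₇ with all γ_i ∈ ℤ is closed under octonionic multiplication and under conjugation, and every element has integer trace and integer norm. -/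
noncomputable section

namespace Octo

/-! ### Auxiliary machinery for the triquadratic lattice theorem -/

private lemma e0' : e 0 = ((⟨1,0,0,0⟩ : Quaternion ℝ), (⟨0,0,0,0⟩ : Quaternion ℝ)) := rfl
private lemma e1' : e 1 = ((⟨0,1,0,0⟩ : Quaternion ℝ), (⟨0,0,0,0⟩ : Quaternion ℝ)) := rfl
private lemma e2' : e 2 = ((⟨0,0,1,0⟩ : Quaternion ℝ), (⟨0,0,0,0⟩ : Quaternion ℝ)) := rfl
private lemma e3' : e 3 = ((⟨0,0,0,0⟩ : Quaternion ℝ), (⟨1,0,0,0⟩ : Quaternion ℝ)) := rfl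
private lemma e4' : e 4 = ((⟨0,0,0,1⟩ : Quaternion ℝ), (⟨0,0,0,0⟩ : Quaternion ℝ)) := rfl
private lemma e5' : e 5 = ((⟨0,0,0,0⟩ : Quaternion ℝ), (⟨0,1,0,0⟩ : Quaternion ℝ)) := rfl
private lemma e6' : e 6 = ((⟨0,0,0,0⟩ : Quaternion ℝ), (⟨0,0,1,0⟩ : Quaternion ℝ)) := rfl
private lemma e7' : e 7 = ((⟨0,0,0,0⟩ : Quaternion ℝ), (⟨0,0,0,1⟩ : Quaternion ℝ)) := rfl

private lemma repr (c : Fin 8 → ℝ) : ∑ i, c i • e i =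
    ((⟨c 0, c 1, c 2, c 4⟩ : Quaternion ℝ), (⟨c 3, c 5, c 6, c 7⟩ : Quaternion ℝ)) := by
  refine Prod.ext ?_ ?_ <;> apply Quaternion.ext <;>
    simp only [Fin.sum_univ_eight, Prod.fst_add, Prod.snd_add, Prod.smul_fst, Prod.smul_snd,
      Quaternion.re_add, Quaternion.imI_add, Quaternion.imJ_add, Quaternion.imK_add,
      Quaternion.re_smul, Quaternion.imI_smul, Quaternion.imJ_smul, Quaternion.imK_smul] <;>
    simp [e, Quaternion.re_one, Quaternion.imI_one, Quaternion.imJ_one, Quaternion.imK_one,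
      Quaternion.re_zero, Quaternion.imI_zero, Quaternion.imJ_zero, Quaternion.imK_zero]

/-- The octonion with integer coordinates `a0,…,a7` relative to the triquadratic weights. -/
def pairOf (s₁ s₂ s₃ : ℝ) (a0 a1 a2 a3 a4 a5 a6 a7 : ℤ) : 𝕆 :=
  ((⟨a0, a1 * s₁, a2 * s₂, a4 * (s₁ * s₂)⟩ : Quaternion ℝ),
   (⟨a3 * s₃, a5 * (s₁ * s₃), a6 * (s₂ * s₃), a7 * (s₁ * (s₂ * s₃))⟩ : Quaternion ℝ))

private lemma key (m₁ m₂ m₃ : ℕ) (s₁ s₂ s₃ : ℝ) (h1 : s₁ * s₁ = (m₁ : ℝ))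
    (h2 : s₂ * s₂ = (m₂ : ℝ)) (h3 : s₃ * s₃ = (m₃ : ℝ))
    (a0 a1 a2 a3 a4 a5 a6 a7 b0 b1 b2 b3 b4 b5 b6 b7 : ℤ) :
    omul (pairOf s₁ s₂ s₃ a0 a1 a2 a3 a4 a5 a6 a7) (pairOf s₁ s₂ s₃ b0 b1 b2 b3 b4 b5 b6 b7) =
    pairOf s₁ s₂ s₃
      (a0*b0 - m₁*(a1*b1) - m₂*(a2*b2) - m₃*(a3*b3) - m₁*m₂*(a4*b4) - m₁*m₃*(a5*b5)
        - m₂*m₃*(a6*b6) - m₁*m₂*m₃*(a7*b7))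
      (a0*b1 + a1*b0 + m₂*(a2*b4 - a4*b2) + m₃*(a5*b3 - a3*b5) + m₂*m₃*(a7*b6 - a6*b7))
      (a0*b2 + a2*b0 + m₁*(a4*b1 - a1*b4) + m₃*(a6*b3 - a3*b6) + m₁*m₃*(a5*b7 - a7*b5))
      (a0*b3 + a3*b0 + m₁*(a1*b5 - a5*b1) + m₂*(a2*b6 - a6*b2) + m₁*m₂*(a4*b7 - a7*b4))
      (a0*b4 + a4*b0 + a1*b2 - a2*b1 + m₃*(a7*b3 + a6*b5 - a5*b6 - a3*b7))
      (a0*b5 + a5*b0 + a3*b1 - a1*b3 + m₂*(a7*b2 - a6*b4 + a4*b6 - a2*b7))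
      (a0*b6 + a6*b0 + a3*b2 - a2*b3 + m₁*(a5*b4 - a7*b1 - a4*b5 + a1*b7))
      (a0*b7 + a7*b0 + a6*b1 - a5*b2 - a4*b3 + a3*b4 + a2*b5 - a1*b6) := by
  refine Prod.ext ?_ ?_ <;> apply Quaternion.ext <;>
    · simp only [omul, Quaternion.re_mul, Quaternion.imI_mul, Quaternion.imJ_mul,
        Quaternion.imK_mul, Quaternion.re_sub, Quaternion.imI_sub, Quaternion.imJ_sub,
        Quaternion.imK_sub, Quaternion.re_add, Quaternion.imI_add, Quaternion.imJ_add,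
        Quaternion.imK_add, Quaternion.re_star, Quaternion.imI_star, Quaternion.imJ_star,
        Quaternion.imK_star]
      simp only [pairOf]
      push_cast [← h1, ← h2, ← h3]
      ring

private lemma oconj_pair (s₁ s₂ s₃ : ℝ) (a0 a1 a2 a3 a4 a5 a6 a7 : ℤ) :
    oconj (pairOf s₁ s₂ s₃ a0 a1 a2 a3 a4 a5 a6 a7) =
      pairOf s₁ s₂ s₃ a0 (-a1) (-a2) (-a3) (-a4) (-a5) (-a6) (-a7) := by
  refine Prod.ext ?_ ?_ <;> apply Quaternion.ext <;>
    simp [oconj] <;> simp [pairOf] <;> push_cast <;> ring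

private lemma w0' (m₁ m₂ m₃ : ℕ) : weight m₁ m₂ m₃ 0 = 1 := rfl
private lemma w1' (m₁ m₂ m₃ : ℕ) : weight m₁ m₂ m₃ 1 = Real.sqrt m₁ := rfl
private lemma w2' (m₁ m₂ m₃ : ℕ) : weight m₁ m₂ m₃ 2 = Real.sqrt m₂ := rfl
private lemma w3' (m₁ m₂ m₃ : ℕ) : weight m₁ m₂ m₃ 3 = Real.sqrt m₃ := rfl
private lemma w4' (m₁ m₂ m₃ : ℕ) :
    weight m₁ m₂ m₃ 4 = Real.sqrt m₁ * Real.sqrt m₂ := by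
  show Real.sqrt ((m₁ : ℝ) * (m₂ : ℝ)) = _
  exact Real.sqrt_mul (Nat.cast_nonneg m₁) _
private lemma w5' (m₁ m₂ m₃ : ℕ) :
    weight m₁ m₂ m₃ 5 = Real.sqrt m₁ * Real.sqrt m₃ := by
  show Real.sqrt ((m₁ : ℝ) * (m₃ : ℝ)) = _
  exact Real.sqrt_mul (Nat.cast_nonneg m₁) _
private lemma w6' (m₁ m₂ m₃ : ℕ) :
    weight m₁ m₂ m₃ 6 = Real.sqrt m₂ * Real.sqrt m₃ := by
  show Real.sqrt ((m₂ : ℝ) * (m₃ : ℝ)) = _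
  exact Real.sqrt_mul (Nat.cast_nonneg m₂) _
private lemma w7' (m₁ m₂ m₃ : ℕ) :
    weight m₁ m₂ m₃ 7 = Real.sqrt m₁ * (Real.sqrt m₂ * Real.sqrt m₃) := by
  show Real.sqrt ((m₁ : ℝ) * (m₂ : ℝ) * (m₃ : ℝ)) = _
  rw [Real.sqrt_mul (by positivity), Real.sqrt_mul (Nat.cast_nonneg m₁), mul_assoc]

private lemma sum_weight_eq (m₁ m₂ m₃ : ℕ) (γ : Fin 8 → ℤ) :
    ∑ i, ((γ i : ℝ) * weight m₁ m₂ m₃ i) • e i =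
      pairOf (Real.sqrt m₁) (Real.sqrt m₂) (Real.sqrt m₃)
        (γ 0) (γ 1) (γ 2) (γ 3) (γ 4) (γ 5) (γ 6) (γ 7) := by
  rw [repr]
  refine Prod.ext ?_ ?_ <;> apply Quaternion.ext <;>
    simp [pairOf, w0' m₁ m₂ m₃, w1' m₁ m₂ m₃, w2' m₁ m₂ m₃, w3' m₁ m₂ m₃, w4' m₁ m₂ m₃,
      w5' m₁ m₂ m₃, w6' m₁ m₂ m₃, w7' m₁ m₂ m₃, mul_assoc]

/-- The set of octonions with integer coefficients times the triquadratic weights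
is closed under multiplication and conjugation, and all its elements have
integer trace and norm. -/
theorem triquadratic_integral_lattice (m₁ m₂ m₃ : ℕ)
    (h₁ : Squarefree m₁) (h₂ : Squarefree m₂) (h₃ : Squarefree m₃)
    (hp₁ : 0 < m₁) (hp₂ : 0 < m₂) (hp₃ : 0 < m₃)
    (h12 : m₁ ≠ m₂) (h13 : m₁ ≠ m₃) (h23 : m₂ ≠ m₃)
    (Ω : Set 𝕆)
    (hΩ : Ω = {z : 𝕆 | ∃ γ : Fin 8 → ℤ, z = ∑ i, ((γ i : ℝ) * weight m₁ m₂ m₃ i) • e i}) :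
    (∀ a ∈ Ω, ∀ b ∈ Ω, omul a b ∈ Ω) ∧
    (∀ a ∈ Ω, oconj a ∈ Ω) ∧
    (∀ a ∈ Ω, (∃ n : ℤ, S a = n) ∧ (∃ n : ℤ, N a = n)) := by
  subst hΩ
  have h1 : Real.sqrt m₁ * Real.sqrt m₁ = (m₁ : ℝ) := Real.mul_self_sqrt (Nat.cast_nonneg _)
  have h2 : Real.sqrt m₂ * Real.sqrt m₂ = (m₂ : ℝ) := Real.mul_self_sqrt (Nat.cast_nonneg _)
  have h3 : Real.sqrt m₃ * Real.sqrt m₃ = (m₃ : ℝ) := Real.mul_self_sqrt (Nat.cast_nonneg _)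
  have hmem : ∀ z : 𝕆,
      z ∈ {z : 𝕆 | ∃ γ : Fin 8 → ℤ, z = ∑ i, ((γ i : ℝ) * weight m₁ m₂ m₃ i) • e i} ↔
      ∃ a0 a1 a2 a3 a4 a5 a6 a7 : ℤ,
        z = pairOf (Real.sqrt m₁) (Real.sqrt m₂) (Real.sqrt m₃) a0 a1 a2 a3 a4 a5 a6 a7 := by
    intro z
    constructor
    · rintro ⟨γ, rfl⟩
      exact ⟨γ 0, γ 1, γ 2, γ 3, γ 4, γ 5, γ 6, γ 7, sum_weight_eq m₁ m₂ m₃ γ⟩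
    · rintro ⟨a0, a1, a2, a3, a4, a5, a6, a7, rfl⟩
      refine ⟨![a0, a1, a2, a3, a4, a5, a6, a7], ?_⟩
      rw [sum_weight_eq]
      rfl
  refine ⟨?_, ?_, ?_⟩
  · intro a ha b hb
    rw [hmem] at ha hb ⊢
    obtain ⟨a0, a1, a2, a3, a4, a5, a6, a7, rfl⟩ := ha
    obtain ⟨b0, b1, b2, b3, b4, b5, b6, b7, rfl⟩ := hb
    exact ⟨_, _, _, _, _, _, _, _, key m₁ m₂ m₃ _ _ _ h1 h2 h3 a0 a1 a2 a3 a4 a5 a6 a7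
      b0 b1 b2 b3 b4 b5 b6 b7⟩
  · intro a ha
    rw [hmem] at ha ⊢
    obtain ⟨a0, a1, a2, a3, a4, a5, a6, a7, rfl⟩ := ha
    exact ⟨_, _, _, _, _, _, _, _, oconj_pair _ _ _ a0 a1 a2 a3 a4 a5 a6 a7⟩
  · intro a ha
    rw [hmem] at ha
    obtain ⟨a0, a1, a2, a3, a4, a5, a6, a7, rfl⟩ := ha
    constructor
    · refine ⟨2 * a0, ?_⟩
      simp only [S, re, oconj, Prod.fst_add, Quaternion.re_add, Quaternion.re_star]
      simp only [pairOf]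
      push_cast
      ring
    · refine ⟨a0*a0 + m₁*(a1*a1) + m₂*(a2*a2) + m₃*(a3*a3) + m₁*m₂*(a4*a4) + m₁*m₃*(a5*a5)
        + m₂*m₃*(a6*a6) + m₁*m₂*m₃*(a7*a7), ?_⟩
      unfold N
      rw [oconj_pair, key m₁ m₂ m₃ _ _ _ h1 h2 h3]
      simp only [re, pairOf]
      push_cast
      ring

end Octo
end
end
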